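/- Let (G_1,…,G_n) be graphs on a vertex set V, let A ⊆ V × [n] be a color-set, and let m, D > 0 be integers. Let F be an oriented forest whose edges are colored with colors from [n], with at most mD vertices and maximum degree at most D, having a leaf w and an edge v → w of color ℓ, and let K = F − w. Suppose (G_1,…,G_n) is a (2m, 2D+1, A)-color expander, and let φ be an (m, D, A)-good embedding of K into (G_1,…,G_n) with (φ(v), ℓ) ∈ A. Then φ can be extended to an (m, D, A)-good embedding of F (i.e., there is an (m,D,A)-good embedding ψ of F with ψ restricted to V(K) equal to φ). -/

import Mathlib

open Finset

variable {β V : Type*}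

/-- The neighbourhood `N(S) = ⋃_{(u,i) ∈ S} N_{G_i}(u)` of a color-set `S`. -/
def colorNbhd {n : ℕ} (G : Fin n → SimpleGraph V) (S : Finset (V × Fin n)) : Set V :=
  {w | ∃ q ∈ S, (G q.2).Adj q.1 w}

/-- `(G_1, …, G_n)` is an `(m, D, A)`-color expander: every color-set `S ⊆ A` with
`|S| ≤ m` satisfies `|N(S)| ≥ D|S|`. -/
def IsColorExpander {n : ℕ} (G : Fin n → SimpleGraph V) (m D : ℕ)
    (A : Set (V × Fin n)) : Prop :=
  ∀ S : Finset (V × Fin n), ↑S ⊆ A → S.card ≤ m → D * S.card ≤ (colorNbhd G S).ncard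

/-- `(Vf, E)` is an oriented forest: all edges join distinct vertices of `Vf`, each
edge appears with only one orientation, and the underlying simple graph is acyclic. -/
def IsOrientedForest [DecidableEq β] (Vf : Finset β) (E : Finset (β × β)) : Prop :=
  (∀ e ∈ E, e.1 ∈ Vf ∧ e.2 ∈ Vf ∧ e.1 ≠ e.2) ∧
  (∀ a b : β, (a, b) ∈ E → (b, a) ∉ E) ∧
  (SimpleGraph.fromRel fun a b => (a, b) ∈ E ∨ (b, a) ∈ E).IsAcyclic

/-- The degree of `x` in the (oriented) edge set `E`: the number of edges incident
to `x` in either orientation. -/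
def degAt [DecidableEq β] (E : Finset (β × β)) (x : β) : ℕ :=
  (E.filter fun e => e.1 = x ∨ e.2 = x).card

/-- `u` has an incoming edge of color `i` in the colored edge set `(E, c)`. -/
def HasInEdge {n : ℕ} (E : Finset (β × β)) (c : β × β → Fin n) (i : Fin n) (u : β) : Prop :=
  ∃ a, (a, u) ∈ E ∧ c (a, u) = i

/-- `φ` is an embedding of the colored forest with vertices `Vf`, edges `E` and edge
colors `c` into `(G_1, …, G_n)`: it is injective on `Vf` and sends every edge of
color `i` to an edge of `G_i`. -/
def IsColEmbedding {n : ℕ} (G : Fin n → SimpleGraph V) (Vf : Finset β)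
    (E : Finset (β × β)) (c : β × β → Fin n) (φ : β → V) : Prop :=
  Set.InjOn φ ↑Vf ∧ ∀ e ∈ E, (G (c e)).Adj (φ e.1) (φ e.2)

/-- The number of edges of color `i` incident to `φ⁻¹(x)` in the colored edge set
`(E, c)` (as seen through the embedding `φ`). -/
def colDegAt {n : ℕ} [DecidableEq β] [DecidableEq V] (E : Finset (β × β))
    (c : β × β → Fin n) (φ : β → V) (x : V) (i : Fin n) : ℕ :=
  (E.filter fun e => c e = i ∧ (φ e.1 = x ∨ φ e.2 = x)).card

/-- `φ` is an `(m, D, A)`-good embedding of the colored forest `(Vf, E, c)` into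
`(G_1, …, G_n)`: it is an embedding, and for every color-set `S ⊆ A` with `|S| ≤ m`,
`|N(S) ∖ φ(Vf)| ≥ |S ∩ {(φ u, i) : u ∈ Vf has an in-edge of color i}|
  + Σ_{(x,i) ∈ S} (D − d_i(x))`. -/
def IsGoodEmbedding {n : ℕ} [DecidableEq β] [DecidableEq V]
    (G : Fin n → SimpleGraph V) (m D : ℕ) (A : Set (V × Fin n))
    (Vf : Finset β) (E : Finset (β × β)) (c : β × β → Fin n) (φ : β → V) : Prop :=
  IsColEmbedding G Vf E c φ ∧
  ∀ S : Finset (V × Fin n), ↑S ⊆ A → S.card ≤ m →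
    (((S : Set (V × Fin n)) ∩
        {q | ∃ u ∈ Vf, φ u = q.1 ∧ HasInEdge E c q.2 u}).ncard : ℤ)
      + ∑ q ∈ S, ((D : ℤ) - colDegAt E c φ q.1 q.2)
      ≤ ((colorNbhd G S \ (φ '' ↑Vf)).ncard : ℤ)

/-- Extension lemma: if `(G_1,…,G_n)` is a `(2m, 2D+1, A)`-color expander, `F` is an
oriented edge-colored forest with at most `mD` vertices and maximum degree at most `D`,
`w` is a leaf of `F` with (unique) edge `v → w` of color `ℓ`, `(φ v, ℓ) ∈ A`, and `φ`
is an `(m, D, A)`-good embedding of `K = F − w`, then `φ` extends to an `(m, D, A)`-good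
embedding of `F`. -/
theorem statement_5 [DecidableEq β] [Fintype V] [DecidableEq V] {n : ℕ}
    (G : Fin n → SimpleGraph V) (A : Set (V × Fin n)) (m D : ℕ)
    (hm : 0 < m) (hD : 0 < D)
    (Vf : Finset β) (Ef : Finset (β × β)) (c : β × β → Fin n)
    (hforest : IsOrientedForest Vf Ef)
    (hcard : Vf.card ≤ m * D)
    (hmaxdeg : ∀ x, degAt Ef x ≤ D)
    (w v : β) (ℓ : Fin n)
    (hleaf : degAt Ef w = 1) (hvw : (v, w) ∈ Ef) (hcol : c (v, w) = ℓ)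
    (hexp : IsColorExpander G (2 * m) (2 * D + 1) A)
    (φ : β → V)
    (hgood : IsGoodEmbedding G m D A (Vf.erase w) (Ef.erase (v, w)) c φ)
    (hA : (φ v, ℓ) ∈ A) :
    ∃ ψ : β → V, (∀ u ∈ Vf.erase w, ψ u = φ u) ∧
      IsGoodEmbedding G m D A Vf Ef c ψ := by
  classical
  obtain ⟨⟨hinj, hadj⟩, hgoodS⟩ := hgood
  obtain ⟨hvVf, hwVf, hvne⟩ := hforest.1 _ hvw
  -- the only edge incident to `w` is `(v, w)`
  have hw_only : ∀ e ∈ Ef, (e.1 = w ∨ e.2 = w) → e = (v, w) := by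
    intro e he hew
    have h1 : (v, w) ∈ Ef.filter (fun e => e.1 = w ∨ e.2 = w) := by
      simp [hvw]
    have h2 : e ∈ Ef.filter (fun e => e.1 = w ∨ e.2 = w) := by
      simp [he, hew]
    exact Finset.card_le_one.mp (le_of_eq hleaf) _ h2 _ h1
  have hvK : v ∈ Vf.erase w := Finset.mem_erase.mpr ⟨hvne, hvVf⟩
  have hEf'_ne : ∀ e ∈ Ef.erase (v, w), e.1 ≠ w ∧ e.2 ≠ w := by
    intro e he
    obtain ⟨hne, heEf⟩ := Finset.mem_erase.mp he
    constructor
    · intro h; exact hne (hw_only e heEf (Or.inl h))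
    · intro h; exact hne (hw_only e heEf (Or.inr h))
  set φK : Set V := φ '' ↑(Vf.erase w) with hφKdef
  set InK : Set (V × Fin n) :=
    {q | ∃ u ∈ Vf.erase w, φ u = q.1 ∧ HasInEdge (Ef.erase (v, w)) c q.2 u} with hInKdef
  have hfK : ∀ S : Finset (V × Fin n), ↑S ⊆ A → S.card ≤ m →
      ((↑S ∩ InK).ncard : ℤ)
        + ∑ q ∈ S, ((D : ℤ) - colDegAt (Ef.erase (v, w)) c φ q.1 q.2)
        ≤ ((colorNbhd G S \ φK).ncard : ℤ) := hgoodS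
  -- `|φ(K)| ≤ mD - 1`
  have hφK_card : φK.ncard + 1 ≤ m * D := by
    have h1 : φK.ncard ≤ (Vf.erase w).card := by
      calc φK.ncard ≤ (↑(Vf.erase w) : Set β).ncard :=
            Set.ncard_image_le (Set.toFinite _)
        _ = (Vf.erase w).card := Set.ncard_coe_finset _
    have h2 : (Vf.erase w).card + 1 = Vf.card := Finset.card_erase_add_one hwVf
    omega
  have hexp' : ∀ S : Finset (V × Fin n), ↑S ⊆ A → S.card ≤ 2 * m →
      (2 * D + 1) * S.card ≤ (colorNbhd G S \ φK).ncard + φK.ncard := by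
    intro S hSA hSm
    have h1 := hexp S hSA hSm
    have h2 : (colorNbhd G S).ncard ≤ (colorNbhd G S \ φK).ncard + φK.ncard := by
      calc (colorNbhd G S).ncard ≤ ((colorNbhd G S \ φK) ∪ φK).ncard :=
            Set.ncard_le_ncard
              (fun x hx => by by_cases h : x ∈ φK <;> simp [h, hx]) (Set.toFinite _)
        _ ≤ _ := Set.ncard_union_le _ _
    omega
  have hIn_le : ∀ S : Finset (V × Fin n), (↑S ∩ InK).ncard ≤ S.card := by
    intro S
    calc (↑S ∩ InK).ncard ≤ (↑S : Set (V × Fin n)).ncard :=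
          Set.ncard_inter_le_ncard_left _ _ (Set.toFinite _)
      _ = S.card := Set.ncard_coe_finset S
  have hsum_le : ∀ S : Finset (V × Fin n),
      ∑ q ∈ S, ((D : ℤ) - colDegAt (Ef.erase (v, w)) c φ q.1 q.2)
        ≤ (D : ℤ) * S.card := by
    intro S
    calc ∑ q ∈ S, ((D : ℤ) - colDegAt (Ef.erase (v, w)) c φ q.1 q.2)
        ≤ ∑ _q ∈ S, (D : ℤ) :=
          Finset.sum_le_sum (fun q _ => by
            have : (0 : ℤ) ≤ colDegAt (Ef.erase (v, w)) c φ q.1 q.2 := by positivity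
            linarith)
      _ = (D : ℤ) * S.card := by
          rw [Finset.sum_const, nsmul_eq_mul]; ring
  -- goodness holds for sets of size up to `2m`
  have hfK2m : ∀ S : Finset (V × Fin n), ↑S ⊆ A → S.card ≤ 2 * m →
      ((↑S ∩ InK).ncard : ℤ)
        + ∑ q ∈ S, ((D : ℤ) - colDegAt (Ef.erase (v, w)) c φ q.1 q.2)
        ≤ ((colorNbhd G S \ φK).ncard : ℤ) := by
    intro S hSA hSm
    by_cases hm' : S.card ≤ m
    · exact hfK S hSA hm'
    · have h1 := hexp' S hSA hSm
      have h2 := hIn_le S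
      have h3 := hsum_le S
      have h4 := hφK_card
      have hm2 : m + 1 ≤ S.card := by omega
      have hc1 : ((2 * D + 1 : ℕ) : ℤ) * S.card
          ≤ ((colorNbhd G S \ φK).ncard : ℤ) + (φK.ncard : ℤ) := by
        exact_mod_cast h1
      have hc4 : (φK.ncard : ℤ) + 1 ≤ (m : ℤ) * D := by exact_mod_cast h4
      have hc2 : ((↑S ∩ InK).ncard : ℤ) ≤ (S.card : ℤ) := by exact_mod_cast h2
      have hcm : (m : ℤ) + 1 ≤ (S.card : ℤ) := by exact_mod_cast hm2
      have hDpos : (1 : ℤ) ≤ (D : ℤ) := by exact_mod_cast hD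
      have hmul : (D : ℤ) * ((m : ℤ) + 1) ≤ (D : ℤ) * S.card :=
        mul_le_mul_of_nonneg_left hcm (by positivity)
      push_cast at hc1
      nlinarith [h3]
  -- tight sets
  set Tight : Finset (V × Fin n) → Prop := fun S => ↑S ⊆ A ∧ S.card ≤ m ∧ (φ v, ℓ) ∉ S ∧
    ((↑S ∩ InK).ncard : ℤ)
      + ∑ q ∈ S, ((D : ℤ) - colDegAt (Ef.erase (v, w)) c φ q.1 q.2)
      = ((colorNbhd G S \ φK).ncard : ℤ) with hTightdef
  have hTcard : ∀ S : Finset (V × Fin n), ↑S ⊆ A → S.card ≤ 2 * m →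
      ((↑S ∩ InK).ncard : ℤ)
        + ∑ q ∈ S, ((D : ℤ) - colDegAt (Ef.erase (v, w)) c φ q.1 q.2)
        = ((colorNbhd G S \ φK).ncard : ℤ) → S.card ≤ m := by
    intro S hSA hSm heq
    by_contra hgt
    have hm2 : m + 1 ≤ S.card := by omega
    have h1 := hexp' S hSA hSm
    have h2 := hIn_le S
    have h3 := hsum_le S
    have h4 := hφK_card
    have hc1 : (2 * (D : ℤ) + 1) * S.card
        ≤ ((colorNbhd G S \ φK).ncard : ℤ) + (φK.ncard : ℤ) := by
      exact_mod_cast h1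
    have hc4 : (φK.ncard : ℤ) + 1 ≤ (m : ℤ) * D := by exact_mod_cast h4
    have hc2 : ((↑S ∩ InK).ncard : ℤ) ≤ (S.card : ℤ) := by exact_mod_cast h2
    have hcm : (m : ℤ) + 1 ≤ (S.card : ℤ) := by exact_mod_cast hm2
    have hDpos : (1 : ℤ) ≤ (D : ℤ) := by exact_mod_cast hD
    have hmul : (D : ℤ) * ((m : ℤ) + 1) ≤ (D : ℤ) * S.card :=
      mul_le_mul_of_nonneg_left hcm (by positivity)
    nlinarith [h3]
  -- basic properties of `colorNbhd`
  have hN_mono : ∀ S1 S2 : Finset (V × Fin n), S1 ⊆ S2 →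
      colorNbhd G S1 ⊆ colorNbhd G S2 := by
    intro S1 S2 hsub x hx
    obtain ⟨q, hq, h⟩ := hx
    exact ⟨q, hsub hq, h⟩
  have hN_union : ∀ S1 S2 : Finset (V × Fin n),
      colorNbhd G (S1 ∪ S2) = colorNbhd G S1 ∪ colorNbhd G S2 := by
    intro S1 S2
    ext x
    simp only [colorNbhd, Set.mem_setOf_eq, Finset.mem_union, Set.mem_union]
    constructor
    · rintro ⟨q, hq | hq, h⟩
      · exact Or.inl ⟨q, hq, h⟩
      · exact Or.inr ⟨q, hq, h⟩
    · rintro (⟨q, hq, h⟩ | ⟨q, hq, h⟩)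
      · exact ⟨q, Or.inl hq, h⟩
      · exact ⟨q, Or.inr hq, h⟩
  -- modularity of the `InK`-intersection term
  have hInfin : ∀ S : Finset (V × Fin n),
      (↑S ∩ InK).ncard = (S.filter (fun q => q ∈ InK)).card := by
    intro S
    rw [← Set.ncard_coe_finset]
    congr 1
    ext q
    simp [Set.mem_inter_iff]
  -- tight sets are closed under union
  have hT0 : Tight ∅ := by
    refine ⟨by simp, by simp, by simp, ?_⟩
    have : colorNbhd G (∅ : Finset (V × Fin n)) = ∅ := by
      ext x; simp [colorNbhd]
    simp [this]
  have hTunion : ∀ S1, Tight S1 → ∀ S2, Tight S2 → Tight (S1 ∪ S2) := by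
    intro S1 h1 S2 h2
    obtain ⟨h1A, h1m, h1v, h1eq⟩ := h1
    obtain ⟨h2A, h2m, h2v, h2eq⟩ := h2
    have hUA : ↑(S1 ∪ S2) ⊆ A := by
      intro q hq
      rcases Finset.mem_union.mp hq with h | h
      · exact h1A h
      · exact h2A h
    have hU2m : (S1 ∪ S2).card ≤ 2 * m :=
      le_trans (Finset.card_union_le _ _) (by omega)
    have hIA : ↑(S1 ∩ S2) ⊆ A := fun q hq => h1A (Finset.mem_inter.mp hq).1
    have hIm : (S1 ∩ S2).card ≤ m :=
      le_trans (Finset.card_le_card (Finset.inter_subset_left)) h1m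
    -- modularity of the sum
    have hsumeq : (∑ q ∈ S1 ∪ S2, ((D : ℤ) - colDegAt (Ef.erase (v, w)) c φ q.1 q.2))
        + ∑ q ∈ S1 ∩ S2, ((D : ℤ) - colDegAt (Ef.erase (v, w)) c φ q.1 q.2)
        = (∑ q ∈ S1, ((D : ℤ) - colDegAt (Ef.erase (v, w)) c φ q.1 q.2))
          + ∑ q ∈ S2, ((D : ℤ) - colDegAt (Ef.erase (v, w)) c φ q.1 q.2) :=
      Finset.sum_union_inter
    -- modularity of the `InK` term
    have hIneq : (↑(S1 ∪ S2) ∩ InK).ncard + (↑(S1 ∩ S2) ∩ InK).ncard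
        = (↑S1 ∩ InK).ncard + (↑S2 ∩ InK).ncard := by
      rw [hInfin, hInfin, hInfin, hInfin, Finset.filter_union, Finset.filter_inter_distrib]
      exact Finset.card_union_add_card_inter _ _
    -- submodularity of the neighbourhood term
    have hNle : (colorNbhd G (S1 ∪ S2) \ φK).ncard + (colorNbhd G (S1 ∩ S2) \ φK).ncard
        ≤ (colorNbhd G S1 \ φK).ncard + (colorNbhd G S2 \ φK).ncard := by
      have e1 : colorNbhd G (S1 ∪ S2) \ φK
          = (colorNbhd G S1 \ φK) ∪ (colorNbhd G S2 \ φK) := by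
        rw [hN_union, Set.union_diff_distrib]
      have e2 : colorNbhd G (S1 ∩ S2) \ φK
          ⊆ (colorNbhd G S1 \ φK) ∩ (colorNbhd G S2 \ φK) := by
        intro x hx
        exact ⟨⟨hN_mono _ _ Finset.inter_subset_left hx.1, hx.2⟩,
          ⟨hN_mono _ _ Finset.inter_subset_right hx.1, hx.2⟩⟩
      calc (colorNbhd G (S1 ∪ S2) \ φK).ncard + (colorNbhd G (S1 ∩ S2) \ φK).ncard
          ≤ ((colorNbhd G S1 \ φK) ∪ (colorNbhd G S2 \ φK)).ncard
            + ((colorNbhd G S1 \ φK) ∩ (colorNbhd G S2 \ φK)).ncard := by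
            rw [e1]
            exact Nat.add_le_add_left (Set.ncard_le_ncard e2 (Set.toFinite _)) _
        _ = _ := Set.ncard_union_add_ncard_inter _ _ (Set.toFinite _) (Set.toFinite _)
    have hUge := hfK2m (S1 ∪ S2) hUA hU2m
    have hIge := hfK (S1 ∩ S2) hIA hIm
    have hUeq : ((↑(S1 ∪ S2) ∩ InK).ncard : ℤ)
        + ∑ q ∈ S1 ∪ S2, ((D : ℤ) - colDegAt (Ef.erase (v, w)) c φ q.1 q.2)
        = ((colorNbhd G (S1 ∪ S2) \ φK).ncard : ℤ) := by
      have hc1 : ((↑(S1 ∪ S2) ∩ InK).ncard : ℤ) + ((↑(S1 ∩ S2) ∩ InK).ncard : ℤ)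
          = ((↑S1 ∩ InK).ncard : ℤ) + ((↑S2 ∩ InK).ncard : ℤ) := by exact_mod_cast hIneq
      have hc2 : ((colorNbhd G (S1 ∪ S2) \ φK).ncard : ℤ)
          + ((colorNbhd G (S1 ∩ S2) \ φK).ncard : ℤ)
          ≤ ((colorNbhd G S1 \ φK).ncard : ℤ) + ((colorNbhd G S2 \ φK).ncard : ℤ) := by
        exact_mod_cast hNle
      linarith
    refine ⟨hUA, hTcard _ hUA hU2m hUeq, ?_, hUeq⟩
    simp only [Finset.mem_union]
    rintro (h | h)
    · exact h1v h
    · exact h2v h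
  -- maximal tight set
  obtain ⟨T, hT, hTmax⟩ : ∃ T, Tight T ∧ ∀ S, Tight S → S ⊆ T := by
    refine ⟨(Finset.univ.filter Tight).sup id, ?_, ?_⟩
    · exact Finset.sup_induction hT0 hTunion (fun b hb => (Finset.mem_filter.mp hb).2)
    · intro S hS
      exact Finset.le_sup (f := id) (Finset.mem_filter.mpr ⟨Finset.mem_univ S, hS⟩)
  obtain ⟨hTA, hTm, hTv, hTeq⟩ := hT
  -- the color-set `S' = T ∪ {(φ v, ℓ)}`
  have hS'A : ↑(insert (φ v, ℓ) T) ⊆ A := by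
    intro q hq
    rcases Finset.mem_insert.mp hq with rfl | h
    · exact hA
    · exact hTA h
  have hS'card : (insert (φ v, ℓ) T).card ≤ 2 * m := by
    rw [Finset.card_insert_of_notMem hTv]
    omega
  have hge := hfK2m (insert (φ v, ℓ) T) hS'A hS'card
  -- `colDegAt` of `(φ v, ℓ)` in `K` is at most `D - 1`
  have hdv : colDegAt (Ef.erase (v, w)) c φ (φ v) ℓ + 1 ≤ D := by
    have hsub : (Ef.erase (v, w)).filter
          (fun e => c e = ℓ ∧ (φ e.1 = φ v ∨ φ e.2 = φ v))
        ⊆ (Ef.filter (fun e => e.1 = v ∨ e.2 = v)).erase (v, w) := by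
      intro e he
      simp only [Finset.mem_filter, Finset.mem_erase] at he ⊢
      obtain ⟨⟨hne, heEf⟩, hc, hor⟩ := he
      refine ⟨hne, heEf, ?_⟩
      obtain ⟨h1, h2⟩ := hEf'_ne e (Finset.mem_erase.mpr ⟨hne, heEf⟩)
      obtain ⟨he1, he2, _⟩ := hforest.1 e heEf
      rcases hor with h | h
      · exact Or.inl (hinj (Finset.mem_coe.mpr (Finset.mem_erase.mpr ⟨h1, he1⟩))
          (Finset.mem_coe.mpr hvK) h)
      · exact Or.inr (hinj (Finset.mem_coe.mpr (Finset.mem_erase.mpr ⟨h2, he2⟩))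
          (Finset.mem_coe.mpr hvK) h)
    have hvwmem : (v, w) ∈ Ef.filter (fun e => e.1 = v ∨ e.2 = v) := by
      simp [hvw]
    have hpos : 0 < (Ef.filter (fun e => e.1 = v ∨ e.2 = v)).card :=
      Finset.card_pos.mpr ⟨(v, w), hvwmem⟩
    have hDv := hmaxdeg v
    unfold degAt at hDv
    have hcard2 : ((Ef.filter (fun e => e.1 = v ∨ e.2 = v)).erase (v, w)).card + 1
        = (Ef.filter (fun e => e.1 = v ∨ e.2 = v)).card :=
      Finset.card_erase_add_one hvwmem
    have := Finset.card_le_card hsub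
    unfold colDegAt
    omega
  -- there exists a valid image `y` for `w`
  have hstrict : (colorNbhd G T \ φK).ncard < (colorNbhd G (insert (φ v, ℓ) T) \ φK).ncard := by
    have hsum_ins : ∑ q ∈ insert (φ v, ℓ) T,
          ((D : ℤ) - colDegAt (Ef.erase (v, w)) c φ q.1 q.2)
        = ((D : ℤ) - colDegAt (Ef.erase (v, w)) c φ (φ v) ℓ)
          + ∑ q ∈ T, ((D : ℤ) - colDegAt (Ef.erase (v, w)) c φ q.1 q.2) :=
      Finset.sum_insert hTv
    have hIn_mono : ((↑T ∩ InK).ncard : ℤ) ≤ ((↑(insert (φ v, ℓ) T) ∩ InK).ncard : ℤ) := by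
      have : (↑T ∩ InK) ⊆ (↑(insert (φ v, ℓ) T) ∩ InK) := by
        intro q hq
        exact ⟨by simp only [Finset.coe_insert]; exact Set.mem_insert_of_mem _ hq.1, hq.2⟩
      exact_mod_cast Set.ncard_le_ncard this (Set.toFinite _)
    have hd : (1 : ℤ) ≤ (D : ℤ) - colDegAt (Ef.erase (v, w)) c φ (φ v) ℓ := by
      have : (colDegAt (Ef.erase (v, w)) c φ (φ v) ℓ : ℤ) + 1 ≤ (D : ℤ) := by
        exact_mod_cast hdv
      linarith
    have : ((colorNbhd G T \ φK).ncard : ℤ) + 1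
        ≤ ((colorNbhd G (insert (φ v, ℓ) T) \ φK).ncard : ℤ) := by
      rw [hsum_ins] at hge
      linarith [hge, hTeq, hIn_mono, hd]
    exact_mod_cast this
  obtain ⟨y, hyS', hyT⟩ : ∃ y ∈ colorNbhd G (insert (φ v, ℓ) T) \ φK,
      y ∉ colorNbhd G T \ φK := by
    by_contra h
    push_neg at h
    have hsub : colorNbhd G (insert (φ v, ℓ) T) \ φK ⊆ colorNbhd G T \ φK := h
    have := Set.ncard_le_ncard hsub (Set.toFinite _)
    omega
  have hyφK : y ∉ φK := hyS'.2
  have hyNT : y ∉ colorNbhd G T := fun h => hyT ⟨h, hyφK⟩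
  have hyadj : (G ℓ).Adj (φ v) y := by
    obtain ⟨q, hq, hadjq⟩ := hyS'.1
    rcases Finset.mem_insert.mp hq with rfl | hqT
    · exact hadjq
    · exact absurd ⟨q, hqT, hadjq⟩ hyNT
  have hyne : φ v ≠ y := hyadj.ne
  -- define the extension
  set ψ : β → V := Function.update φ w y with hψdef
  have hψw : ψ w = y := Function.update_self w y φ
  have hψne : ∀ u, u ≠ w → ψ u = φ u := fun u hu => Function.update_of_ne hu y φ
  have hψv : ψ v = φ v := hψne v hvne
  refine ⟨ψ, fun u hu => hψne u (Finset.ne_of_mem_erase hu), ⟨?_, ?_⟩, ?_⟩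
  · -- injectivity
    intro a ha b hb hab
    by_cases haw : a = w <;> by_cases hbw : b = w
    · rw [haw, hbw]
    · exfalso
      rw [haw, hψw, hψne b hbw] at hab
      exact hyφK ⟨b, Finset.mem_coe.mpr (Finset.mem_erase.mpr ⟨hbw, Finset.mem_coe.mp hb⟩),
        hab.symm⟩
    · exfalso
      rw [hbw, hψw, hψne a haw] at hab
      exact hyφK ⟨a, Finset.mem_coe.mpr (Finset.mem_erase.mpr ⟨haw, Finset.mem_coe.mp ha⟩),
        hab⟩
    · rw [hψne a haw, hψne b hbw] at hab
      exact hinj (Finset.mem_coe.mpr (Finset.mem_erase.mpr ⟨haw, Finset.mem_coe.mp ha⟩))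
        (Finset.mem_coe.mpr (Finset.mem_erase.mpr ⟨hbw, Finset.mem_coe.mp hb⟩)) hab
  · -- edges are mapped to edges
    intro e he
    by_cases hevw : e = (v, w)
    · subst hevw
      show (G (c (v, w))).Adj (ψ v) (ψ w)
      rw [hcol, hψw, hψv]
      exact hyadj
    · obtain ⟨h1, h2⟩ := hEf'_ne e (Finset.mem_erase.mpr ⟨hevw, he⟩)
      rw [hψne _ h1, hψne _ h2]
      exact hadj e (Finset.mem_erase.mpr ⟨hevw, he⟩)
  -- goodness of the extension
  -- (b) degree identity
  have hdeg_eq : ∀ x : V, ∀ i : Fin n, (colDegAt Ef c ψ x i : ℤ) =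
      (colDegAt (Ef.erase (v, w)) c φ x i : ℤ)
      + (if ((x, i) : V × Fin n) = (φ v, ℓ) then 1 else 0)
      + (if ((x, i) : V × Fin n) = (y, ℓ) then 1 else 0) := by
    intro x i
    have hins : Ef = insert (v, w) (Ef.erase (v, w)) := (Finset.insert_erase hvw).symm
    have hnm : (v, w) ∉ Ef.erase (v, w) := Finset.notMem_erase _ _
    have hfeq : (Ef.erase (v, w)).filter (fun e => c e = i ∧ (ψ e.1 = x ∨ ψ e.2 = x))
        = (Ef.erase (v, w)).filter (fun e => c e = i ∧ (φ e.1 = x ∨ φ e.2 = x)) := by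
      apply Finset.filter_congr
      intro e he
      obtain ⟨h1, h2⟩ := hEf'_ne e he
      rw [hψne _ h1, hψne _ h2]
    unfold colDegAt
    conv_lhs => rw [hins]
    rw [Finset.filter_insert]
    by_cases hcase : c (v, w) = i ∧ (ψ v = x ∨ ψ w = x)
    · rw [if_pos hcase, Finset.card_insert_of_notMem
        (fun h => hnm (Finset.mem_of_mem_filter _ h)), hfeq]
      obtain ⟨hci, hor⟩ := hcase
      have hiℓ : i = ℓ := by rw [← hci, hcol]
      subst hiℓ
      rw [hψv, hψw] at hor
      rcases hor with h | h
      · subst h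
        rw [if_pos rfl, if_neg (by simp [hyne])]
        push_cast; ring
      · subst h
        rw [if_neg (by simp [Ne.symm hyne]), if_pos rfl]
        push_cast; ring
    · rw [if_neg hcase, hfeq]
      have h1 : ¬ (((x, i) : V × Fin n) = (φ v, ℓ)) := by
        rintro h
        rw [Prod.mk.injEq] at h
        exact hcase ⟨by rw [hcol, h.2], Or.inl (by rw [hψv, h.1])⟩
      have h2 : ¬ (((x, i) : V × Fin n) = (y, ℓ)) := by
        rintro h
        rw [Prod.mk.injEq] at h
        exact hcase ⟨by rw [hcol, h.2], Or.inr (by rw [hψw, h.1])⟩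
      rw [if_neg h1, if_neg h2]
      push_cast; ring
  -- (a) the in-edge set of `F` is contained in that of `K` plus `(y, ℓ)`
  have hIn_sub : {q : V × Fin n | ∃ u ∈ Vf, ψ u = q.1 ∧ HasInEdge Ef c q.2 u}
      ⊆ InK ∪ {(y, ℓ)} := by
    intro q hq
    obtain ⟨u, huVf, hux, a, haEf, hac⟩ := hq
    by_cases huw : u = w
    · right
      have havw : ((a, u) : β × β) = (v, w) := hw_only (a, u) haEf (Or.inr (by rw [huw]))
      have hqℓ : q.2 = ℓ := by rw [← hac, havw, hcol]
      have hq1 : q.1 = y := by rw [← hux, huw, hψw]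
      have hqe : q = (y, ℓ) := Prod.ext hq1 hqℓ
      simp [hqe]
    · left
      refine ⟨u, Finset.mem_erase.mpr ⟨huw, huVf⟩, by rw [← hux, hψne u huw], a, ?_, hac⟩
      refine Finset.mem_erase.mpr ⟨?_, haEf⟩
      rintro h
      rw [Prod.mk.injEq] at h
      exact huw h.2
  -- (c) image of the extension
  have hψim : ψ '' ↑Vf = insert y φK := by
    ext z
    constructor
    · rintro ⟨u, hu, rfl⟩
      by_cases huw : u = w
      · subst huw
        rw [hψw]
        exact Set.mem_insert _ _
      · rw [hψne u huw]
        exact Set.mem_insert_of_mem _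
          ⟨u, Finset.mem_coe.mpr (Finset.mem_erase.mpr ⟨huw, Finset.mem_coe.mp hu⟩), rfl⟩
    · rintro (rfl | ⟨u, hu, rfl⟩)
      · exact ⟨w, Finset.mem_coe.mpr hwVf, hψw⟩
      · have huw : u ≠ w := (Finset.mem_erase.mp (Finset.mem_coe.mp hu)).1
        exact ⟨u, Finset.mem_coe.mpr (Finset.mem_of_mem_erase (Finset.mem_coe.mp hu)),
          hψne u huw⟩
  -- final verification
  intro S hSA hSm
  have hK := hfK S hSA hSm
  -- split the degree sum
  have hsplit : ∑ q ∈ S, ((D : ℤ) - colDegAt Ef c ψ q.1 q.2)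
      = (∑ q ∈ S, ((D : ℤ) - colDegAt (Ef.erase (v, w)) c φ q.1 q.2))
        - (if (φ v, ℓ) ∈ S then (1 : ℤ) else 0)
        - (if (y, ℓ) ∈ S then (1 : ℤ) else 0) := by
    have hterm : ∀ q ∈ S, ((D : ℤ) - colDegAt Ef c ψ q.1 q.2)
        = (((D : ℤ) - colDegAt (Ef.erase (v, w)) c φ q.1 q.2)
            - (if q = (φ v, ℓ) then (1 : ℤ) else 0))
          - (if q = (y, ℓ) then (1 : ℤ) else 0) := by
      intro q _
      have h := hdeg_eq q.1 q.2
      rw [Prod.mk.eta] at h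
      rw [h]; ring
    rw [Finset.sum_congr rfl hterm, Finset.sum_sub_distrib, Finset.sum_sub_distrib,
      Finset.sum_ite_eq' S ((φ v, ℓ) : V × Fin n) (fun _ => (1 : ℤ)),
      Finset.sum_ite_eq' S ((y, ℓ) : V × Fin n) (fun _ => (1 : ℤ))]
  -- bound the in-edge intersection
  have hInF : ((↑S ∩ {q : V × Fin n | ∃ u ∈ Vf, ψ u = q.1 ∧ HasInEdge Ef c q.2 u}).ncard : ℤ)
      ≤ ((↑S ∩ InK).ncard : ℤ) + (if (y, ℓ) ∈ S then (1 : ℤ) else 0) := by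
    by_cases hyS : (y, ℓ) ∈ S
    · rw [if_pos hyS]
      have hsub : ↑S ∩ {q : V × Fin n | ∃ u ∈ Vf, ψ u = q.1 ∧ HasInEdge Ef c q.2 u}
          ⊆ insert ((y, ℓ) : V × Fin n) (↑S ∩ InK) := by
        rintro q ⟨hq1, hq2⟩
        rcases hIn_sub hq2 with h | h
        · exact Set.mem_insert_of_mem _ ⟨hq1, h⟩
        · rw [Set.mem_singleton_iff] at h
          rw [h]
          exact Set.mem_insert _ _
      have h1 : (↑S ∩ {q : V × Fin n | ∃ u ∈ Vf, ψ u = q.1 ∧ HasInEdge Ef c q.2 u}).ncard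
          ≤ (insert ((y, ℓ) : V × Fin n) (↑S ∩ InK)).ncard :=
        Set.ncard_le_ncard hsub (Set.toFinite _)
      have h2 := Set.ncard_insert_le ((y, ℓ) : V × Fin n) (↑S ∩ InK)
      push_cast
      omega
    · rw [if_neg hyS]
      have hsub : ↑S ∩ {q : V × Fin n | ∃ u ∈ Vf, ψ u = q.1 ∧ HasInEdge Ef c q.2 u}
          ⊆ ↑S ∩ InK := by
        rintro q ⟨hq1, hq2⟩
        rcases hIn_sub hq2 with h | h
        · exact ⟨hq1, h⟩
        · rw [Set.mem_singleton_iff] at h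
          exact absurd (Finset.mem_coe.mp (h ▸ hq1)) hyS
      have := Set.ncard_le_ncard hsub (Set.toFinite _)
      push_cast
      omega
  -- bound the neighbourhood difference
  have hRHS : ((colorNbhd G S \ φK).ncard : ℤ)
      - (if y ∈ colorNbhd G S \ φK then (1 : ℤ) else 0)
      ≤ ((colorNbhd G S \ ψ '' ↑Vf).ncard : ℤ) := by
    rw [hψim]
    have hdiff : colorNbhd G S \ insert y φK = (colorNbhd G S \ φK) \ {y} := by
      ext z
      simp only [Set.mem_diff, Set.mem_insert_iff, Set.mem_singleton_iff]
      tauto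
    rw [hdiff]
    by_cases hy : y ∈ colorNbhd G S \ φK
    · rw [if_pos hy]
      have := Set.ncard_diff_singleton_add_one hy (Set.toFinite _)
      push_cast
      omega
    · rw [if_neg hy, Set.diff_singleton_eq_self hy]
      omega
  rw [hsplit]
  by_cases hyN : y ∈ colorNbhd G S \ φK
  · by_cases hpS : (φ v, ℓ) ∈ S
    · rw [if_pos hyN] at hRHS
      rw [if_pos hpS]
      linarith
    · rw [if_pos hyN] at hRHS
      rw [if_neg hpS]
      have hne : ((↑S ∩ InK).ncard : ℤ)
          + ∑ q ∈ S, ((D : ℤ) - colDegAt (Ef.erase (v, w)) c φ q.1 q.2)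
          ≠ ((colorNbhd G S \ φK).ncard : ℤ) := by
        intro heq
        have hST : S ⊆ T := hTmax S ⟨hSA, hSm, hpS, heq⟩
        exact hyNT (hN_mono S T hST hyN.1)
      have hlt : ((↑S ∩ InK).ncard : ℤ)
          + ∑ q ∈ S, ((D : ℤ) - colDegAt (Ef.erase (v, w)) c φ q.1 q.2) + 1
          ≤ ((colorNbhd G S \ φK).ncard : ℤ) := lt_of_le_of_ne hK hne
      linarith
  · rw [if_neg hyN] at hRHS
    have : (if (φ v, ℓ) ∈ S then (1 : ℤ) else 0) ≥ 0 := by positivity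
    linarith
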